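/- Let a > 0, b > 0 with a ≠ b, let μ > 0, θ ∈ ℝ, ϑ = θ + √(π/2)/μ and ϱ = θ − √(π/2)/μ, and assume ϱ ≥ 0. Let f_W(w) = ( e^(−w/a) − e^(−w/b) ) / (a − b) for w > 0. Then ∫₀^ϱ f_W(w) dw + ∫_ϱ^ϑ (1/2 − (μ/√(2π))·(w − θ)) · f_W(w) dw = 1 + (μ/(√(2π)·(a − b))) · ( a²·( e^(−ϑ/a) − e^(−ϱ/a) ) − b²·( e^(−ϑ/b) − e^(−ϱ/b) ) ). -/

import Mathlib

open MeasureTheory Real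

lemma antider (c A B : ℝ) (hc : c ≠ 0) (w : ℝ) :
    HasDerivAt (fun w => Real.exp (-w / c) * (-(c * (A + B * w)) - c ^ 2 * B))
      ((A + B * w) * Real.exp (-w / c)) w := by
  have h1 : HasDerivAt (fun w : ℝ => -w / c) (-1 / c) w := by
    simpa using ((hasDerivAt_id w).neg.div_const c)
  have h2 := h1.exp
  have h3 : HasDerivAt (fun w : ℝ => -(c * (A + B * w)) - c ^ 2 * B) (-(c * B)) w := by
    have h4 := ((((hasDerivAt_id w).const_mul B).const_add A).const_mul c).neg.sub_const
      (c ^ 2 * B)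
    simpa using h4
  have := h2.mul h3
  refine this.congr_deriv ?_
  field_simp
  ring

/-- Lemma 1: the closed-form outage probability after maximum ratio combining in the
Rayleigh (`m = 1`) case, obtained by integrating the linearized Q-function approximation
against the density of the sum of two independent exponential link SNRs. -/
theorem outage_MRC_rayleigh_closed_form
    (a b μ θ ϑ ϱ : ℝ) (ha : 0 < a) (hb : 0 < b) (hab : a ≠ b) (hμ : 0 < μ)
    (hϑ : ϑ = θ + Real.sqrt (π / 2) / μ) (hϱ : ϱ = θ - Real.sqrt (π / 2) / μ)
    (hϱ0 : 0 ≤ ϱ)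
    (fW : ℝ → ℝ)
    (hfW : ∀ w, fW w = (Real.exp (-w / a) - Real.exp (-w / b)) / (a - b)) :
    (∫ w in (0:ℝ)..ϱ, fW w)
      + (∫ w in ϱ..ϑ, (1 / 2 - μ / Real.sqrt (2 * π) * (w - θ)) * fW w)
    = 1 + μ / (Real.sqrt (2 * π) * (a - b)) *
        (a ^ 2 * (Real.exp (-ϑ / a) - Real.exp (-ϱ / a))
          - b ^ 2 * (Real.exp (-ϑ / b) - Real.exp (-ϱ / b))) := by
  have hπ : (0:ℝ) < π := Real.pi_pos
  have hsq : Real.sqrt (2 * π) = 2 * Real.sqrt (π / 2) := by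
    rw [show (2:ℝ) * π = 2 ^ 2 * (π / 2) by ring, Real.sqrt_mul (by positivity),
      Real.sqrt_sq (by norm_num)]
  have hsp : 0 < Real.sqrt (π / 2) := Real.sqrt_pos.mpr (by positivity)
  set k : ℝ := μ / Real.sqrt (2 * π) with hk
  have hk0 : 0 < k := by positivity
  have hab' : a - b ≠ 0 := sub_ne_zero.mpr hab
  have hs2k : Real.sqrt (π / 2) / μ = 1 / (2 * k) := by
    rw [hk, hsq]; field_simp
  have hϑ' : ϑ = θ + 1 / (2 * k) := by rw [hϑ, hs2k]
  have hϱ' : ϱ = θ - 1 / (2 * k) := by rw [hϱ, hs2k]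
  have hμk : μ = k * Real.sqrt (2 * π) := by
    rw [hk]; field_simp
  -- antiderivatives
  set F1 : ℝ → ℝ := fun w =>
    (Real.exp (-w / a) * (-(a * (1 + 0 * w)) - a ^ 2 * 0)
      - Real.exp (-w / b) * (-(b * (1 + 0 * w)) - b ^ 2 * 0)) / (a - b) with hF1
  set F2 : ℝ → ℝ := fun w =>
    (Real.exp (-w / a) * (-(a * ((1 / 2 + k * θ) + (-k) * w)) - a ^ 2 * (-k))
      - Real.exp (-w / b) * (-(b * ((1 / 2 + k * θ) + (-k) * w)) - b ^ 2 * (-k))) / (a - b)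
    with hF2
  have hd1 : ∀ w ∈ Set.uIcc (0:ℝ) ϱ, HasDerivAt F1 (fW w) w := by
    intro w _
    have := ((antider a 1 0 ha.ne' w).sub (antider b 1 0 hb.ne' w)).div_const (a - b)
    rw [hfW w]
    refine this.congr_deriv ?_
    ring
  have hd2 : ∀ w ∈ Set.uIcc ϱ ϑ,
      HasDerivAt F2 ((1 / 2 - μ / Real.sqrt (2 * π) * (w - θ)) * fW w) w := by
    intro w _
    have := ((antider a (1 / 2 + k * θ) (-k) ha.ne' w).sub
      (antider b (1 / 2 + k * θ) (-k) hb.ne' w)).div_const (a - b)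
    rw [hfW w, ← hk]
    refine this.congr_deriv ?_
    ring
  have hcont : Continuous fW := by
    have : fW = fun w => (Real.exp (-w / a) - Real.exp (-w / b)) / (a - b) := funext hfW
    rw [this]; fun_prop
  have hi1 : IntervalIntegrable fW volume 0 ϱ := hcont.intervalIntegrable _ _
  have hi2 : IntervalIntegrable (fun w => (1 / 2 - μ / Real.sqrt (2 * π) * (w - θ)) * fW w)
      volume ϱ ϑ := by
    apply Continuous.intervalIntegrable
    fun_prop
  rw [intervalIntegral.integral_eq_sub_of_hasDerivAt hd1 hi1,
    intervalIntegral.integral_eq_sub_of_hasDerivAt hd2 hi2]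
  rw [hF1, hF2, hμk, hϑ', hϱ']
  simp only [neg_zero, zero_div, Real.exp_zero]
  have hsq2 : Real.sqrt (2 * π) ≠ 0 := by positivity
  field_simp
  ring
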